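/- Let S1 = {L1,...,L5} and S2 = {L1',...,L5'} be two disjoint line spreads of V(4,2), and suppose L5' intersects neither L1 nor L2 nontrivially. Then there exist two distinct lines of S2 each of which intersects both L1 and L2 nontrivially. -/

import Mathlib

open Finset

abbrev V42 := Fin 4 → ZMod 2

/-- A line spread of `V(4,2)`: a set of 2-dimensional subspaces such that every
nonzero vector lies in exactly one of them. -/
def IsLineSpread (S : Set (Submodule (ZMod 2) V42)) : Prop :=
  (∀ L ∈ S, Module.finrank (ZMod 2) L = 2) ∧
  ∀ v : V42, v ≠ 0 → ∃! L, L ∈ S ∧ v ∈ L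

lemma two_le_finrank_of_two_nonzero (W : Submodule (ZMod 2) V42) (x y : V42)
    (hx : x ∈ W) (hy : y ∈ W) (hx0 : x ≠ 0) (hy0 : y ≠ 0) (hxy : x ≠ y) :
    2 ≤ Module.finrank (ZMod 2) W := by
  have : Fintype W := Fintype.ofFinite W
  have hcard : Fintype.card W = 2 ^ Module.finrank (ZMod 2) W := by
    simpa using Module.card_eq_pow_finrank (K := ZMod 2) (V := W)
  have h3 : 3 ≤ Fintype.card W := by
    have hc : ({⟨0, W.zero_mem⟩, ⟨x, hx⟩, ⟨y, hy⟩} : Finset W).card = 3 := by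
      rw [card_insert_of_notMem (by simp [Subtype.ext_iff, Ne, eq_comm, hx0, hy0]),
        card_insert_of_notMem (by simp [Subtype.ext_iff, hxy]), card_singleton]
    calc 3 = ({⟨0, W.zero_mem⟩, ⟨x, hx⟩, ⟨y, hy⟩} : Finset W).card := hc.symm
    _ ≤ Fintype.card W := Finset.card_le_univ _
  by_contra h
  interval_cases hr : Module.finrank (ZMod 2) W <;> omega

/-- Two distinct 2-dimensional subspaces meet in at most one nonzero vector. -/
lemma inf_unique (M L : Submodule (ZMod 2) V42)
    (hM : Module.finrank (ZMod 2) M = 2) (hL : Module.finrank (ZMod 2) L = 2)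
    (hne : M ≠ L) (x y : V42) (hxM : x ∈ M) (hxL : x ∈ L) (hyM : y ∈ M) (hyL : y ∈ L)
    (hx0 : x ≠ 0) (hy0 : y ≠ 0) : x = y := by
  by_contra hxy
  have h2 : 2 ≤ Module.finrank (ZMod 2) ↥(M ⊓ L) :=
    two_le_finrank_of_two_nonzero _ x y ⟨hxM, hxL⟩ ⟨hyM, hyL⟩ hx0 hy0 hxy
  have hMeq : M ⊓ L = M :=
    Submodule.eq_of_le_of_finrank_le inf_le_left (by omega)
  have : M = L := Submodule.eq_of_le_of_finrank_le
    (by rw [← hMeq]; exact inf_le_right) (by omega)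
  exact hne this

lemma card_nonzero_of_line (M : Submodule (ZMod 2) V42)
    (hM : Module.finrank (ZMod 2) M = 2) [DecidablePred (· ∈ M)] :
    (univ.filter (fun v : V42 => v ∈ M ∧ v ≠ 0)).card = 3 := by
  have hc4 : (univ.filter (fun v : V42 => v ∈ M)).card = 4 := by
    have h1 : Fintype.card {v : V42 // v ∈ M} = 2 ^ Module.finrank (ZMod 2) M := by
      simpa using Module.card_eq_pow_finrank (K := ZMod 2) (V := {v : V42 // v ∈ M})
    have h2 : Fintype.card {v : V42 // v ∈ M} = (univ.filter (fun v : V42 => v ∈ M)).card :=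
      Fintype.card_subtype _
    rw [← h2, h1, hM]; norm_num
  have heq : univ.filter (fun v : V42 => v ∈ M ∧ v ≠ 0)
      = (univ.filter (fun v : V42 => v ∈ M)).erase 0 := by
    ext v; simp [mem_erase, and_comm]
  rw [heq, card_erase_of_mem (by simp [M.zero_mem]), hc4]

theorem two_transversal_lines (S1 S2 : Set (Submodule (ZMod 2) V42))
    (h1 : IsLineSpread S1) (h2 : IsLineSpread S2) (hdisj : S1 ∩ S2 = ∅)
    (L1 L2 : Submodule (ZMod 2) V42) (hL1 : L1 ∈ S1) (hL2 : L2 ∈ S1) (h12 : L1 ≠ L2)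
    (L5' : Submodule (ZMod 2) V42) (hL5' : L5' ∈ S2)
    (hm1 : L5' ⊓ L1 = ⊥) (hm2 : L5' ⊓ L2 = ⊥) :
    ∃ M M', M ∈ S2 ∧ M' ∈ S2 ∧ M ≠ M' ∧
      M ⊓ L1 ≠ ⊥ ∧ M ⊓ L2 ≠ ⊥ ∧ M' ⊓ L1 ≠ ⊥ ∧ M' ⊓ L2 ≠ ⊥ := by
  classical
  obtain ⟨hdim1, huniq1⟩ := h1
  obtain ⟨hdim2, huniq2⟩ := h2
  have hnotin : ∀ L ∈ S1, L ∉ S2 := by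
    intro L hL hL'
    have : L ∈ S1 ∩ S2 := ⟨hL, hL'⟩
    rw [hdisj] at this
    exact this
  set NV : Submodule (ZMod 2) V42 → Finset V42 :=
    fun M => univ.filter (fun v : V42 => v ∈ M ∧ v ≠ 0) with hNV
  have hfin : S2.Finite := Set.toFinite S2
  set T2 : Finset (Submodule (ZMod 2) V42) := hfin.toFinset with hT2
  have hmemT2 : ∀ M, M ∈ T2 ↔ M ∈ S2 := fun M => hfin.mem_toFinset
  -- |S2| ≤ 5
  have hT2card : T2.card ≤ 5 := by
    have hdisjNV : ∀ M ∈ T2, ∀ M' ∈ T2, M ≠ M' → Disjoint (NV M) (NV M') := by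
      intro M hM M' hM' hne
      rw [Finset.disjoint_left]
      intro v hv hv'
      simp only [hNV, mem_filter] at hv hv'
      exact hne (((huniq2 v hv.2.2).unique ⟨(hmemT2 M).1 hM, hv.2.1⟩
        ⟨(hmemT2 M').1 hM', hv'.2.1⟩))
    have hsum : ∑ M ∈ T2, (NV M).card = (T2.biUnion NV).card :=
      (Finset.card_biUnion hdisjNV).symm
    have hsum3 : ∑ M ∈ T2, (NV M).card = 3 * T2.card := by
      rw [Finset.sum_congr rfl fun M hM =>
        card_nonzero_of_line M (hdim2 M ((hmemT2 M).1 hM))]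
      simp [mul_comm]
    have hsub : T2.biUnion NV ⊆ univ.filter (fun v : V42 => v ≠ 0) := by
      intro v hv
      simp only [Finset.mem_biUnion] at hv
      obtain ⟨M, _, hvM⟩ := hv
      simp only [hNV, mem_filter] at hvM ⊢
      exact ⟨mem_univ v, hvM.2.2⟩
    have hcard15 : (univ.filter (fun v : V42 => v ≠ 0)).card = 15 := by
      rw [Finset.filter_ne', Finset.card_erase_of_mem (mem_univ 0), Finset.card_univ]
      simp [Fintype.card_fun]
    have := Finset.card_le_card hsub
    rw [← hsum, hsum3, hcard15] at this
    omega
  -- the unique line of S2 through a nonzero vector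
  have choose_line : ∀ v : V42, v ≠ 0 → ∃ M, M ∈ S2 ∧ v ∈ M :=
    fun v hv => (huniq2 v hv).exists
  set f : V42 → Submodule (ZMod 2) V42 :=
    fun v => if h : v ≠ 0 then (choose_line v h).choose else ⊥ with hf
  have hfS2 : ∀ v : V42, v ≠ 0 → f v ∈ S2 ∧ v ∈ f v := by
    intro v hv
    simp only [hf, dif_pos hv]
    exact (choose_line v hv).choose_spec
  -- generic transversal count
  have key : ∀ L ∈ S1, L5' ⊓ L = ⊥ →
      3 ≤ (T2.filter (fun M => M ⊓ L ≠ ⊥ ∧ M ≠ L5')).card := by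
    intro L hL hmL
    have h3 : (NV L).card = 3 := card_nonzero_of_line L (hdim1 L hL)
    rw [← h3]
    apply Finset.card_le_card_of_injOn f
    · intro v hv
      simp only [hNV, mem_coe, mem_filter] at hv
      obtain ⟨_, hvL, hv0⟩ := hv
      obtain ⟨hfvS2, hvfv⟩ := hfS2 v hv0
      simp only [mem_coe, mem_filter]
      refine ⟨(hmemT2 _).2 hfvS2, ?_, ?_⟩
      · intro hbot
        have : v ∈ f v ⊓ L := ⟨hvfv, hvL⟩
        rw [hbot] at this
        exact hv0 this
      · intro heq
        rw [heq] at hvfv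
        have : v ∈ L5' ⊓ L := ⟨hvfv, hvL⟩
        rw [hmL] at this
        exact hv0 this
    · intro v hv w hw hvw
      simp only [hNV, mem_filter, coe_filter, Set.mem_setOf_eq] at hv hw
      obtain ⟨_, hvL, hv0⟩ := hv
      obtain ⟨_, hwL, hw0⟩ := hw
      obtain ⟨hfvS2, hvfv⟩ := hfS2 v hv0
      obtain ⟨hfwS2, hwfw⟩ := hfS2 w hw0
      have hne : f v ≠ L := fun h => hnotin L hL (h ▸ hfvS2)
      exact inf_unique (f v) L (hdim2 _ hfvS2) (hdim1 L hL) hne v w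
        hvfv hvL (hvw ▸ hwfw) hwL hv0 hw0
  have hA := key L1 hL1 hm1
  have hB := key L2 hL2 hm2
  set A := T2.filter (fun M => M ⊓ L1 ≠ ⊥ ∧ M ≠ L5') with hAdef
  set B := T2.filter (fun M => M ⊓ L2 ≠ ⊥ ∧ M ≠ L5') with hBdef
  have hsubU : A ∪ B ⊆ T2.erase L5' := by
    intro M hM
    rw [Finset.mem_union] at hM
    rcases hM with hM | hM <;>
      · simp only [hAdef, hBdef, mem_filter] at hM
        exact Finset.mem_erase.2 ⟨hM.2.2, hM.1⟩
  have hUcard : (A ∪ B).card ≤ 4 := by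
    have := Finset.card_le_card hsubU
    have h5 : L5' ∈ T2 := (hmemT2 _).2 hL5'
    rw [Finset.card_erase_of_mem h5] at this
    omega
  have hinter : 1 < (A ∩ B).card := by
    have := Finset.card_inter_add_card_union A B
    omega
  obtain ⟨M, hM, M', hM', hMM'⟩ := Finset.one_lt_card.1 hinter
  rw [Finset.mem_inter] at hM hM'
  have hMA := Finset.mem_filter.1 hM.1
  have hMB := Finset.mem_filter.1 hM.2
  have hM'A := Finset.mem_filter.1 hM'.1
  have hM'B := Finset.mem_filter.1 hM'.2
  exact ⟨M, M', (hmemT2 M).1 hMA.1, (hmemT2 M').1 hM'A.1, hMM',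
    hMA.2.1, hMB.2.1, hM'A.2.1, hM'B.2.1⟩
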